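/- Let A be a real m×n matrix with m ≥ n, all rows nonzero, and Ax = b, and let σ > 0 satisfy ‖A v‖ ≥ σ·‖v‖ for all v ∈ ℝ^n. Then for every x_0 ∈ ℝ^n, every ε with 0 < ε < ‖A‖, and every natural number k with k ≥ 2·log(‖A‖/ε)·‖A‖_F²/σ², the random Kaczmarz process of length k satisfies E[ ‖A x_k − b‖² ] ≤ ε²·‖x_0 − x‖². -/

import Mathlib

noncomputable section

/-- The `i`-th row of `A` as a vector in Euclidean space. -/
def rowv {m n : ℕ} (A : Matrix (Fin m) (Fin n) ℝ) (i : Fin m) : EuclideanSpace ℝ (Fin n) :=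
  WithLp.toLp 2 (fun j => A i j)

/-- Matrix-vector multiplication, landing in Euclidean space. -/
def mulV {m n : ℕ} (A : Matrix (Fin m) (Fin n) ℝ) (v : EuclideanSpace ℝ (Fin n)) :
    EuclideanSpace ℝ (Fin m) := WithLp.toLp 2 (fun i => ∑ j, A i j * v j)

/-- The square of the Frobenius norm `‖A‖_F²`. -/
def frobSq {m n : ℕ} (A : Matrix (Fin m) (Fin n) ℝ) : ℝ := ∑ i, ∑ j, (A i j) ^ 2

/-- The operator norm `‖A‖` (ℓ² → ℓ²). -/
def opN {m n : ℕ} (A : Matrix (Fin m) (Fin n) ℝ) : ℝ :=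
  ‖LinearMap.toContinuousLinearMap (Matrix.toEuclideanLin A)‖

/-- Orthogonal projection of `w` onto the hyperplane `{v : ⟨a_i, v⟩ = b_i}`. -/
def proj {m n : ℕ} (A : Matrix (Fin m) (Fin n) ℝ) (b : EuclideanSpace ℝ (Fin m)) (i : Fin m)
    (w : EuclideanSpace ℝ (Fin n)) : EuclideanSpace ℝ (Fin n) :=
  w + ((b i - inner (𝕜 := ℝ) (rowv A i) w) / ‖rowv A i‖ ^ 2) • rowv A i

/-- The Kaczmarz trajectory: `traj A b x0 ω j` is `x_j(ω) = π_{ω_j} ⋯ π_{ω_1} x_0`. -/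
def traj {m n k : ℕ} (A : Matrix (Fin m) (Fin n) ℝ) (b : EuclideanSpace ℝ (Fin m))
    (x0 : EuclideanSpace ℝ (Fin n)) (ω : Fin k → Fin m) : ℕ → EuclideanSpace ℝ (Fin n)
  | 0 => x0
  | j + 1 => if h : j < k then proj A b (ω ⟨j, h⟩) (traj A b x0 ω j) else traj A b x0 ω j

/-- The weight `∏_j ‖a_{ω_j}‖²/‖A‖_F²` of an index sequence `ω` for the random Kaczmarz
process. -/
def wt {m n k : ℕ} (A : Matrix (Fin m) (Fin n) ℝ) (ω : Fin k → Fin m) : ℝ :=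
  ∏ j, ‖rowv A (ω j)‖ ^ 2 / frobSq A

end

section Aux
variable {m n : ℕ} (A : Matrix (Fin m) (Fin n) ℝ)

lemma eunorm_sq {ι : Type*} [Fintype ι] (v : EuclideanSpace ℝ ι) : ‖v‖ ^ 2 = ∑ i, v i ^ 2 := by
  rw [EuclideanSpace.norm_eq, Real.sq_sqrt (by positivity)]; simp [Real.norm_eq_abs, sq_abs]

lemma mulV_apply (v : EuclideanSpace ℝ (Fin n)) (i : Fin m) :
    mulV A v i = inner (𝕜 := ℝ) (rowv A i) v := by
  simp [mulV, rowv, PiLp.inner_apply, mul_comm]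

lemma mulV_sub (v w : EuclideanSpace ℝ (Fin n)) : mulV A (v - w) = mulV A v - mulV A w := by
  ext i
  simp only [mulV, PiLp.sub_apply, mul_sub, Finset.sum_sub_distrib]

lemma norm_mulV_sq (v : EuclideanSpace ℝ (Fin n)) :
    ‖mulV A v‖ ^ 2 = ∑ i, (inner (𝕜 := ℝ) (rowv A i) v) ^ 2 := by
  rw [eunorm_sq]
  exact Finset.sum_congr rfl fun i _ => by rw [mulV_apply]

lemma frobSq_eq : frobSq A = ∑ i, ‖rowv A i‖ ^ 2 := by
  simp only [frobSq, eunorm_sq, rowv]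

lemma mulV_le_opN (v : EuclideanSpace ℝ (Fin n)) : ‖mulV A v‖ ≤ opN A * ‖v‖ := by
  have h : mulV A v = LinearMap.toContinuousLinearMap (Matrix.toEuclideanLin A) v := by
    ext i
    simp [mulV, Matrix.toEuclideanLin_apply, Matrix.mulVec, dotProduct, mul_comm]
  rw [h]
  exact (LinearMap.toContinuousLinearMap (Matrix.toEuclideanLin A)).le_opNorm v

lemma norm_mulV_sq_le (v : EuclideanSpace ℝ (Fin n)) :
    ‖mulV A v‖ ^ 2 ≤ frobSq A * ‖v‖ ^ 2 := by
  rw [norm_mulV_sq, frobSq_eq, Finset.sum_mul]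
  refine Finset.sum_le_sum fun i _ => ?_
  have := abs_real_inner_le_norm (rowv A i) v
  calc (inner (𝕜 := ℝ) (rowv A i) v) ^ 2 = |inner (𝕜 := ℝ) (rowv A i) v| ^ 2 := (sq_abs _).symm
    _ ≤ (‖rowv A i‖ * ‖v‖) ^ 2 := by
        apply pow_le_pow_left₀ (abs_nonneg _) this
    _ = ‖rowv A i‖ ^ 2 * ‖v‖ ^ 2 := by ring

end Aux
section Step
variable {m n : ℕ} (A : Matrix (Fin m) (Fin n) ℝ) (b : EuclideanSpace ℝ (Fin m))
  (x : EuclideanSpace ℝ (Fin n))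

lemma proj_sub (hAx : mulV A x = b) (i : Fin m) (w : EuclideanSpace ℝ (Fin n)) :
    proj A b i w - x =
      (w - x) - ((inner (𝕜 := ℝ) (rowv A i) (w - x)) / ‖rowv A i‖ ^ 2) • rowv A i := by
  have hb : b i = inner (𝕜 := ℝ) (rowv A i) x := by rw [← hAx, mulV_apply]
  simp only [proj, hb, inner_sub_right]
  module

lemma norm_proj_sub_sq (hAx : mulV A x = b) (hrows : ∀ i, rowv A i ≠ 0) (i : Fin m)
    (w : EuclideanSpace ℝ (Fin n)) :
    ‖proj A b i w - x‖ ^ 2 =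
      ‖w - x‖ ^ 2 - (inner (𝕜 := ℝ) (rowv A i) (w - x)) ^ 2 / ‖rowv A i‖ ^ 2 := by
  have ha : ‖rowv A i‖ ≠ 0 := norm_ne_zero_iff.mpr (hrows i)
  rw [proj_sub A b x hAx i w]
  set u := w - x
  set a := rowv A i
  set c : ℝ := (inner (𝕜 := ℝ) a u) / ‖a‖ ^ 2 with hc
  rw [norm_sub_sq_real, real_inner_smul_right, norm_smul, mul_pow, hc]
  have : |(inner (𝕜 := ℝ) a u) / ‖a‖ ^ 2| ^ 2 = ((inner (𝕜 := ℝ) a u) / ‖a‖ ^ 2)^2 := sq_abs _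
  rw [Real.norm_eq_abs, this, real_inner_comm u a]
  field_simp
  ring

lemma step (hAx : mulV A x = b) (hrows : ∀ i, rowv A i ≠ 0) (hF : 0 < frobSq A)
    {σ : ℝ} (hlow : ∀ v : EuclideanSpace ℝ (Fin n), σ * ‖v‖ ≤ ‖mulV A v‖) (hσ : 0 ≤ σ)
    (w : EuclideanSpace ℝ (Fin n)) :
    ∑ i, ‖rowv A i‖ ^ 2 / frobSq A * ‖proj A b i w - x‖ ^ 2 ≤
      (1 - σ ^ 2 / frobSq A) * ‖w - x‖ ^ 2 := by
  have key : ∑ i, ‖rowv A i‖ ^ 2 / frobSq A * ‖proj A b i w - x‖ ^ 2 =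
      ‖w - x‖ ^ 2 - ‖mulV A (w - x)‖ ^ 2 / frobSq A := by
    have : ∀ i : Fin m, ‖rowv A i‖ ^ 2 / frobSq A * ‖proj A b i w - x‖ ^ 2 =
        ‖rowv A i‖ ^ 2 / frobSq A * ‖w - x‖ ^ 2
          - (inner (𝕜 := ℝ) (rowv A i) (w - x)) ^ 2 / frobSq A := by
      intro i
      have ha : ‖rowv A i‖ ≠ 0 := norm_ne_zero_iff.mpr (hrows i)
      rw [norm_proj_sub_sq A b x hAx hrows i w]
      field_simp
    rw [Finset.sum_congr rfl fun i _ => this i, Finset.sum_sub_distrib, ← Finset.sum_div,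
      ← norm_mulV_sq, ← Finset.sum_mul, ← Finset.sum_div, ← frobSq_eq, div_self hF.ne']
    ring
  rw [key]
  have h1 : σ ^ 2 * ‖w - x‖ ^ 2 ≤ ‖mulV A (w - x)‖ ^ 2 := by
    have := hlow (w - x)
    calc σ ^ 2 * ‖w - x‖ ^ 2 = (σ * ‖w - x‖) ^ 2 := by ring
      _ ≤ ‖mulV A (w - x)‖ ^ 2 := by
          apply pow_le_pow_left₀ (by positivity) this
  have h2 : σ ^ 2 * ‖w - x‖ ^ 2 / frobSq A ≤ ‖mulV A (w - x)‖ ^ 2 / frobSq A :=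
    by gcongr
  have h3 : (1 - σ ^ 2 / frobSq A) * ‖w - x‖ ^ 2
      = ‖w - x‖ ^ 2 - σ ^ 2 * ‖w - x‖ ^ 2 / frobSq A := by
    field_simp
  linarith

end Step
section Induct
variable {m n : ℕ} (A : Matrix (Fin m) (Fin n) ℝ) (b : EuclideanSpace ℝ (Fin m))
  (x x0 : EuclideanSpace ℝ (Fin n))

lemma traj_snoc_le {k : ℕ} (ω : Fin k → Fin m) (i : Fin m) :
    ∀ j ≤ k, traj A b x0 (Fin.snoc ω i) j = traj A b x0 ω j := by
  intro j
  induction j with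
  | zero => intro _; rfl
  | succ j ih =>
    intro hj
    have hjk : j < k := hj
    have hjk1 : j < k + 1 := Nat.lt_succ_of_lt hjk
    have hcast : (⟨j, hjk1⟩ : Fin (k + 1)) = Fin.castSucc ⟨j, hjk⟩ := rfl
    simp only [traj, dif_pos hjk, dif_pos hjk1, hcast, Fin.snoc_castSucc,
      ih (Nat.le_of_lt hjk)]

lemma traj_snoc {k : ℕ} (ω : Fin k → Fin m) (i : Fin m) :
    traj A b x0 (Fin.snoc ω i) (k + 1) = proj A b i (traj A b x0 ω k) := by
  have hk : k < k + 1 := Nat.lt_succ_self k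
  have hlast : (⟨k, hk⟩ : Fin (k + 1)) = Fin.last k := rfl
  simp only [traj, dif_pos hk, hlast, Fin.snoc_last, traj_snoc_le A b x0 ω i k le_rfl]

lemma wt_snoc {k : ℕ} (ω : Fin k → Fin m) (i : Fin m) :
    wt A (Fin.snoc ω i) = wt A ω * (‖rowv A i‖ ^ 2 / frobSq A) := by
  simp only [wt, Fin.prod_univ_castSucc, Fin.snoc_castSucc, Fin.snoc_last]

lemma wt_nonneg {k : ℕ} (ω : Fin k → Fin m) (hF : 0 ≤ frobSq A) : 0 ≤ wt A ω :=
  Finset.prod_nonneg fun j _ => by positivity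

lemma key_induction (hAx : mulV A x = b) (hrows : ∀ i, rowv A i ≠ 0) (hF : 0 < frobSq A)
    {σ : ℝ} (hσ : 0 ≤ σ) (hlow : ∀ v : EuclideanSpace ℝ (Fin n), σ * ‖v‖ ≤ ‖mulV A v‖)
    (hq : 0 ≤ 1 - σ ^ 2 / frobSq A) :
    ∀ k : ℕ, ∑ ω : Fin k → Fin m, wt A ω * ‖traj A b x0 ω k - x‖ ^ 2 ≤
      (1 - σ ^ 2 / frobSq A) ^ k * ‖x0 - x‖ ^ 2 := by
  intro k
  induction k with
  | zero =>
    rw [Fintype.sum_unique]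
    simp [wt, traj]
  | succ k ih =>
    have hsum : ∑ ω : Fin (k + 1) → Fin m, wt A ω * ‖traj A b x0 ω (k + 1) - x‖ ^ 2 =
        ∑ p : Fin m × (Fin k → Fin m),
          wt A (Fin.snoc p.2 p.1) * ‖traj A b x0 (Fin.snoc p.2 p.1) (k + 1) - x‖ ^ 2 := by
      refine (Fintype.sum_equiv (Fin.snocEquiv fun _ => Fin m) _ _ fun p => ?_).symm
      rfl
    rw [hsum, Fintype.sum_prod_type_right]
    calc ∑ ω : Fin k → Fin m, ∑ i : Fin m,
          wt A (Fin.snoc ω i) * ‖traj A b x0 (Fin.snoc ω i) (k + 1) - x‖ ^ 2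
        = ∑ ω : Fin k → Fin m, wt A ω *
            ∑ i : Fin m, ‖rowv A i‖ ^ 2 / frobSq A * ‖proj A b i (traj A b x0 ω k) - x‖ ^ 2 := by
          refine Finset.sum_congr rfl fun ω _ => ?_
          rw [Finset.mul_sum]
          refine Finset.sum_congr rfl fun i _ => ?_
          rw [wt_snoc, traj_snoc]
          ring
      _ ≤ ∑ ω : Fin k → Fin m, wt A ω *
            ((1 - σ ^ 2 / frobSq A) * ‖traj A b x0 ω k - x‖ ^ 2) := by
          refine Finset.sum_le_sum fun ω _ => ?_
          exact mul_le_mul_of_nonneg_left (step A b x hAx hrows hF hlow hσ _)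
            (wt_nonneg A ω hF.le)
      _ = (1 - σ ^ 2 / frobSq A) *
            ∑ ω : Fin k → Fin m, wt A ω * ‖traj A b x0 ω k - x‖ ^ 2 := by
          rw [Finset.mul_sum]; exact Finset.sum_congr rfl fun ω _ => by ring
      _ ≤ (1 - σ ^ 2 / frobSq A) * ((1 - σ ^ 2 / frobSq A) ^ k * ‖x0 - x‖ ^ 2) :=
          mul_le_mul_of_nonneg_left ih hq
      _ = (1 - σ ^ 2 / frobSq A) ^ (k + 1) * ‖x0 - x‖ ^ 2 := by ring

end Induct


/-- **Residual bound via the Strohmer–Vershynin rate.** If `σ > 0` satisfies `‖Av‖ ≥ σ‖v‖`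
for all `v`, `0 < ε < ‖A‖`, and `k ≥ 2 log(‖A‖/ε) ‖A‖_F²/σ²`, then
`E ‖A x_k − b‖² ≤ ε² ‖x₀ − x‖²`. -/
theorem residual_bound {m n : ℕ} (A : Matrix (Fin m) (Fin n) ℝ) (hmn : m ≥ n)
    (hrows : ∀ i, rowv A i ≠ 0) (x : EuclideanSpace ℝ (Fin n))
    (b : EuclideanSpace ℝ (Fin m)) (hAx : mulV A x = b)
    (σ : ℝ) (hσ : 0 < σ) (hlow : ∀ v : EuclideanSpace ℝ (Fin n), σ * ‖v‖ ≤ ‖mulV A v‖)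
    (x0 : EuclideanSpace ℝ (Fin n)) (ε : ℝ) (hε0 : 0 < ε) (hε1 : ε < opN A)
    (k : ℕ) (hk : (k : ℝ) ≥ 2 * Real.log (opN A / ε) * frobSq A / σ ^ 2) :
    ∑ ω : Fin k → Fin m, wt A ω * ‖mulV A (traj A b x0 ω k) - b‖ ^ 2 ≤
      ε ^ 2 * ‖x0 - x‖ ^ 2 := by
  have hop : 0 < opN A := hε0.trans hε1
  -- n ≠ 0
  have hn : n ≠ 0 := by
    intro h
    subst h
    have hsub : Subsingleton (EuclideanSpace ℝ (Fin 0)) := inferInstance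
    have : LinearMap.toContinuousLinearMap (Matrix.toEuclideanLin A) = 0 := by
      ext v
      have : v = 0 := Subsingleton.elim v 0
      simp [this]
    rw [opN, this, norm_zero] at hop
    exact lt_irrefl 0 hop
  -- σ² ≤ frobSq A
  have hσF : σ ^ 2 ≤ frobSq A := by
    obtain ⟨i0⟩ : Nonempty (Fin n) := ⟨⟨0, Nat.pos_of_ne_zero hn⟩⟩
    set v : EuclideanSpace ℝ (Fin n) := EuclideanSpace.single i0 (1 : ℝ) with hv
    have hnv : ‖v‖ = 1 := by rw [hv, EuclideanSpace.norm_single]; simp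
    have h1 : σ * ‖v‖ ≤ ‖mulV A v‖ := hlow v
    have h2 : ‖mulV A v‖ ^ 2 ≤ frobSq A * ‖v‖ ^ 2 := norm_mulV_sq_le A v
    rw [hnv] at h1 h2
    nlinarith [norm_nonneg (mulV A v)]
  have hF : 0 < frobSq A := lt_of_lt_of_le (by positivity) hσF
  set q : ℝ := 1 - σ ^ 2 / frobSq A with hqdef
  have hq0 : 0 ≤ q := by
    have : σ ^ 2 / frobSq A ≤ 1 := (div_le_one hF).mpr hσF
    rw [hqdef]
    linarith
  -- bound LHS by opN² times expectation of distances
  have hmain := key_induction A b x x0 hAx hrows hF hσ.le hlow hq0 k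
  have hstep1 : ∑ ω : Fin k → Fin m, wt A ω * ‖mulV A (traj A b x0 ω k) - b‖ ^ 2 ≤
      opN A ^ 2 * ∑ ω : Fin k → Fin m, wt A ω * ‖traj A b x0 ω k - x‖ ^ 2 := by
    rw [Finset.mul_sum]
    refine Finset.sum_le_sum fun ω _ => ?_
    have hres : mulV A (traj A b x0 ω k) - b = mulV A (traj A b x0 ω k - x) := by
      rw [mulV_sub, hAx]
    have hb : ‖mulV A (traj A b x0 ω k) - b‖ ^ 2 ≤ opN A ^ 2 * ‖traj A b x0 ω k - x‖ ^ 2 := by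
      rw [hres]
      calc ‖mulV A (traj A b x0 ω k - x)‖ ^ 2 ≤ (opN A * ‖traj A b x0 ω k - x‖) ^ 2 := by
            apply pow_le_pow_left₀ (norm_nonneg _) (mulV_le_opN A _)
        _ = opN A ^ 2 * ‖traj A b x0 ω k - x‖ ^ 2 := by ring
    calc wt A ω * ‖mulV A (traj A b x0 ω k) - b‖ ^ 2
        ≤ wt A ω * (opN A ^ 2 * ‖traj A b x0 ω k - x‖ ^ 2) :=
          mul_le_mul_of_nonneg_left hb (wt_nonneg A ω hF.le)
      _ = opN A ^ 2 * (wt A ω * ‖traj A b x0 ω k - x‖ ^ 2) := by ring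
  -- analytic bound: opN² q^k ≤ ε²
  set L : ℝ := Real.log (opN A / ε) with hL
  have hεop : ε / opN A > 0 := by positivity
  have hexpL : Real.exp (-L) = ε / opN A := by
    have h : -L = Real.log (ε / opN A) := by rw [hL, ← Real.log_inv, inv_div]
    rw [h, Real.exp_log hεop]
  have hq_exp : q ≤ Real.exp (-(σ ^ 2 / frobSq A)) := by
    have := Real.add_one_le_exp (-(σ ^ 2 / frobSq A))
    linarith
  have hks : 2 * L ≤ (k : ℝ) * (σ ^ 2 / frobSq A) := by
    have hs : 0 < σ ^ 2 / frobSq A := by positivity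
    have := mul_le_mul_of_nonneg_right hk (le_of_lt hs)
    calc 2 * L = 2 * L * frobSq A / σ ^ 2 * (σ ^ 2 / frobSq A) := by
          field_simp
      _ ≤ (k : ℝ) * (σ ^ 2 / frobSq A) := this
  have hqk : q ^ k ≤ (ε / opN A) ^ 2 := by
    calc q ^ k ≤ Real.exp (-(σ ^ 2 / frobSq A)) ^ k :=
          pow_le_pow_left₀ hq0 hq_exp k
      _ = Real.exp (-((k : ℝ) * (σ ^ 2 / frobSq A))) := by
          rw [← Real.exp_nat_mul]
          ring_nf
      _ ≤ Real.exp (-(2 * L)) := Real.exp_le_exp.mpr (by linarith)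
      _ = Real.exp (-L) * Real.exp (-L) := by
          rw [← Real.exp_add]; ring_nf
      _ = (ε / opN A) ^ 2 := by rw [hexpL]; ring
  have hfinal : opN A ^ 2 * q ^ k ≤ ε ^ 2 := by
    have := mul_le_mul_of_nonneg_left hqk (le_of_lt (by positivity : (0:ℝ) < opN A ^ 2))
    calc opN A ^ 2 * q ^ k ≤ opN A ^ 2 * (ε / opN A) ^ 2 := this
      _ = ε ^ 2 := by field_simp
  calc ∑ ω : Fin k → Fin m, wt A ω * ‖mulV A (traj A b x0 ω k) - b‖ ^ 2
      ≤ opN A ^ 2 * ∑ ω : Fin k → Fin m, wt A ω * ‖traj A b x0 ω k - x‖ ^ 2 := hstep1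
    _ ≤ opN A ^ 2 * (q ^ k * ‖x0 - x‖ ^ 2) :=
        mul_le_mul_of_nonneg_left hmain (by positivity)
    _ = opN A ^ 2 * q ^ k * ‖x0 - x‖ ^ 2 := by ring
    _ ≤ ε ^ 2 * ‖x0 - x‖ ^ 2 :=
        mul_le_mul_of_nonneg_right hfinal (by positivity)
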